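/- Let n ≥ 1 and let a₀, …, a_{n−1} : ℂ³ → ℂ be polynomial functions. Suppose there exist R > 0 and b ∈ ℝ such that every pair (ω, k) ∈ ℂ × ℂ³ with |k| > R and ωⁿ + Σ_{m=0}^{n−1} a_m(k) ωᵐ = 0 satisfies Im ω ≤ |Im k| + b. Then there exists b′ ≥ b such that for every k ∈ ℂ³, every root ω of ωⁿ + Σ_{m=0}^{n−1} a_m(k) ωᵐ = 0 satisfies Im ω ≤ |Im k| + b′. -/

import Mathlib

open scoped BigOperators

lemma root_abs_le_aux {n : ℕ} (hn : 1 ≤ n) (c : Fin n → ℂ) (C : ℝ)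
    (hC : ∑ m, ‖c m‖ ≤ C) (ω : ℂ)
    (hω : ω ^ n + ∑ m : Fin n, c m * ω ^ (m : ℕ) = 0) :
    ‖ω‖ ≤ max 1 C := by
  by_cases h1 : ‖ω‖ ≤ 1
  · exact h1.trans (le_max_left _ _)
  push_neg at h1
  have hpos : (0:ℝ) < ‖ω‖ ^ (n - 1) := pow_pos (lt_trans one_pos h1) _
  have hωn : ω ^ n = -∑ m : Fin n, c m * ω ^ (m : ℕ) := by
    linear_combination hω
  have key : ‖ω‖ ^ n ≤ C * ‖ω‖ ^ (n - 1) := by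
    calc ‖ω‖ ^ n = ‖ω ^ n‖ := (norm_pow _ _).symm
      _ = ‖∑ m : Fin n, c m * ω ^ (m : ℕ)‖ := by rw [hωn, norm_neg]
      _ ≤ ∑ m : Fin n, ‖c m * ω ^ (m : ℕ)‖ := norm_sum_le _ _
      _ = ∑ m : Fin n, ‖c m‖ * ‖ω‖ ^ (m : ℕ) := by
          simp [norm_mul, norm_pow]
      _ ≤ ∑ m : Fin n, ‖c m‖ * ‖ω‖ ^ (n - 1) := by
          apply Finset.sum_le_sum
          intro m _
          apply mul_le_mul_of_nonneg_left _ (norm_nonneg _)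
          exact pow_le_pow_right₀ h1.le (Nat.le_sub_one_of_lt m.isLt)
      _ = (∑ m : Fin n, ‖c m‖) * ‖ω‖ ^ (n - 1) := by
          rw [Finset.sum_mul]
      _ ≤ C * ‖ω‖ ^ (n - 1) := by
          exact mul_le_mul_of_nonneg_right hC hpos.le
  have hsplit : ‖ω‖ ^ n = ‖ω‖ * ‖ω‖ ^ (n - 1) := by
    rw [← pow_succ']
    congr 1
    omega
  rw [hsplit] at key
  have : ‖ω‖ ≤ C := le_of_mul_le_mul_right (by linarith [key]) hpos
  exact this.trans (le_max_right _ _)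

/-- Let `n ≥ 1` and let `a₀, …, a_{n−1} : ℂ³ → ℂ` be polynomial functions.
If there exist `R > 0` and `b ∈ ℝ` such that every root `ω` of
`ωⁿ + Σ_{m<n} a_m(k) ωᵐ = 0` with `|k| > R` satisfies `Im ω ≤ |Im k| + b`, then there exists
`b' ≥ b` such that for every `k ∈ ℂ³` every root `ω` satisfies `Im ω ≤ |Im k| + b'`. -/
theorem causality_bound_extends_to_all_k (n : ℕ) (hn : 1 ≤ n)
    (a : Fin n → MvPolynomial (Fin 3) ℂ) (R : ℝ) (hR : 0 < R) (b : ℝ)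
    (h : ∀ (ω : ℂ) (k : Fin 3 → ℂ),
      R < Real.sqrt (∑ i, ‖k i‖ ^ 2) →
      ω ^ n + ∑ m : Fin n, MvPolynomial.eval k (a m) * ω ^ (m : ℕ) = 0 →
      ω.im ≤ Real.sqrt (∑ i, (k i).im ^ 2) + b) :
    ∃ b' : ℝ, b ≤ b' ∧ ∀ (ω : ℂ) (k : Fin 3 → ℂ),
      ω ^ n + ∑ m : Fin n, MvPolynomial.eval k (a m) * ω ^ (m : ℕ) = 0 →
      ω.im ≤ Real.sqrt (∑ i, (k i).im ^ 2) + b' := by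
  set K : Set (Fin 3 → ℂ) := {k | Real.sqrt (∑ i, ‖k i‖ ^ 2) ≤ R} with hK
  have hcont : Continuous fun k : Fin 3 → ℂ => Real.sqrt (∑ i, ‖k i‖ ^ 2) := by
    apply Real.continuous_sqrt.comp
    exact continuous_finset_sum _ fun i _ =>
      ((continuous_norm.comp (continuous_apply i)).pow 2)
  have hKclosed : IsClosed K := isClosed_le hcont continuous_const
  have hKbdd : K ⊆ Metric.closedBall 0 R := by
    intro k hk
    rw [Metric.mem_closedBall, dist_zero_right]
    rw [pi_norm_le_iff_of_nonneg hR.le]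
    intro i
    have h1 : ‖k i‖ ^ 2 ≤ ∑ j, ‖k j‖ ^ 2 :=
      Finset.single_le_sum (f := fun j => ‖k j‖ ^ 2)
        (fun j _ => sq_nonneg _) (Finset.mem_univ i)
    have h2 : ‖k i‖ ≤ Real.sqrt (∑ j, ‖k j‖ ^ 2) := by
      rw [show ‖k i‖ = Real.sqrt (‖k i‖ ^ 2) by
        rw [Real.sqrt_sq (norm_nonneg _)]]
      exact Real.sqrt_le_sqrt h1
    exact h2.trans hk
  have hKcompact : IsCompact K :=
    (Metric.isCompact_of_isClosed_isBounded hKclosed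
      ((Metric.isBounded_closedBall).subset hKbdd))
  have hf : Continuous fun k : Fin 3 → ℂ => ∑ m : Fin n, ‖MvPolynomial.eval k (a m)‖ :=
    continuous_finset_sum _ fun m _ =>
      continuous_norm.comp (MvPolynomial.continuous_eval (a m))
  obtain ⟨C, hC⟩ := hKcompact.exists_bound_of_continuousOn hf.continuousOn
  refine ⟨max b (max 1 C), le_max_left _ _, ?_⟩
  intro ω k hroot
  by_cases hk : R < Real.sqrt (∑ i, ‖k i‖ ^ 2)
  · exact (h ω k hk hroot).trans (by gcongr; exact le_max_left _ _)
  · push_neg at hk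
    have hkK : k ∈ K := hk
    have hCk : ∑ m : Fin n, ‖MvPolynomial.eval k (a m)‖ ≤ C := by
      have := hC k hkK
      calc ∑ m : Fin n, ‖MvPolynomial.eval k (a m)‖
          ≤ ‖∑ m : Fin n, ‖MvPolynomial.eval k (a m)‖‖ := le_abs_self _
        _ ≤ C := this
    have habs : ‖ω‖ ≤ max 1 C :=
      root_abs_le_aux hn (fun m => MvPolynomial.eval k (a m)) C hCk ω hroot
    have him : ω.im ≤ ‖ω‖ := by
      calc ω.im ≤ |ω.im| := le_abs_self _
        _ ≤ ‖ω‖ := Complex.abs_im_le_norm ω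
    have hsqrt : (0:ℝ) ≤ Real.sqrt (∑ i, (k i).im ^ 2) := Real.sqrt_nonneg _
    calc ω.im ≤ max 1 C := him.trans habs
      _ ≤ max b (max 1 C) := le_max_right _ _
      _ ≤ Real.sqrt (∑ i, (k i).im ^ 2) + max b (max 1 C) := by linarith
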